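/- Let A ∈ ℝ^{n×n}, B ∈ ℝ^{n×p}, F ∈ ℝ^{r×n} with rank(F) = r, t₁ > 0, let 𝒞 be the controllability matrix of (A, B) and W_c(t₁) the controllability Gramian. Then rank(F·𝒞) = r if and only if the r×r matrix F·W_c(t₁)·Fᵀ is invertible; i.e., the output controllability rank condition is necessary and sufficient for nonsingularity of the target-control Gramian. -/

import Mathlib

set_option maxHeartbeats 2000000

open Matrix intervalIntegral
/-- Controllability matrix of the pair `(A, B)`: the horizontal block concatenation of
`B, A*B, A²*B, …, A^(n-1)*B`, indexed so that entry `(i, (k, j))` is `(A^k * B) i j`. -/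
noncomputable def ctrbMat {n p : ℕ} (A : Matrix (Fin n) (Fin n) ℝ)
    (B : Matrix (Fin n) (Fin p) ℝ) : Matrix (Fin n) (Fin n × Fin p) ℝ :=
  fun i kj => (A ^ (kj.1 : ℕ) * B) i kj.2

/-- Controllability Gramian `W_c(t₁) = ∫₀^{t₁} exp(As) B Bᵀ exp(Aᵀs) ds` (entrywise integral). -/
noncomputable def ctrbGram {n p : ℕ} (A : Matrix (Fin n) (Fin n) ℝ)
    (B : Matrix (Fin n) (Fin p) ℝ) (t₁ : ℝ) : Matrix (Fin n) (Fin n) ℝ :=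
  fun i j => ∫ s in (0:ℝ)..t₁,
    (NormedSpace.exp (s • A) * B * Bᵀ * NormedSpace.exp (s • Aᵀ)) i j

section Aux

open NormedSpace Set MeasureTheory Function
open scoped Nat

attribute [local instance] Matrix.linftyOpNormedAddCommGroup Matrix.linftyOpNormedRing
  Matrix.linftyOpNormedAlgebra

variable {n p r : ℕ}

/-- The continuous linear map `X ↦ (C * X) *ᵥ v`. -/
noncomputable def mulMulVecCLM {q : ℕ} (C : Matrix (Fin q) (Fin n) ℝ) (v : Fin n → ℝ) :
    Matrix (Fin n) (Fin n) ℝ →L[ℝ] (Fin q → ℝ) :=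
  { toLinearMap :=
      { toFun := fun X => (C * X).mulVec v
        map_add' := fun X Y => by simp [Matrix.mul_add, Matrix.add_mulVec]
        map_smul' := fun c X => by simp [Matrix.mul_smul, Matrix.smul_mulVec] }
    cont := (continuous_const.matrix_mul continuous_id).matrix_mulVec continuous_const }

@[simp] lemma mulMulVecCLM_apply {q : ℕ} (C : Matrix (Fin q) (Fin n) ℝ) (v : Fin n → ℝ)
    (X : Matrix (Fin n) (Fin n) ℝ) : mulMulVecCLM C v X = (C * X).mulVec v := rfl

lemma continuous_expSmul (A' : Matrix (Fin n) (Fin n) ℝ) :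
    Continuous fun s : ℝ => exp (s • A') :=
  exp_continuous.comp (continuous_id.smul continuous_const)

/-- If `(C exp(sA')) v` vanishes on `(0, t₁)`, then all the coefficients `(C A'^k) v` vanish. -/
lemma pow_zero_of_exp_zero {q : ℕ} (A' : Matrix (Fin n) (Fin n) ℝ)
    (C : Matrix (Fin q) (Fin n) ℝ) (v : Fin n → ℝ) {t₁ : ℝ} (ht₁ : 0 < t₁)
    (h : ∀ s ∈ Ioo (0:ℝ) t₁, (C * exp (s • A')).mulVec v = 0) (k : ℕ) :
    (C * A' ^ k).mulVec v = 0 := by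
  have main : ∀ k, ∀ s ∈ Ioo (0:ℝ) t₁, (C * A' ^ k * exp (s • A')).mulVec v = 0 := by
    intro k
    induction k with
    | zero => simpa using h
    | succ k ih =>
      intro s hs
      have hd := hasDerivAt_exp_smul_const' (𝕂 := ℝ) A' s
      have hderiv : HasDerivAt (fun u : ℝ => (C * A' ^ k * exp (u • A')).mulVec v)
          ((C * A' ^ (k + 1) * exp (s • A')).mulVec v) s := by
        have heq : C * A' ^ (k + 1) * exp (s • A')
            = (C * A' ^ k) * (A' * exp (s • A')) := by
          simp only [pow_succ, Matrix.mul_assoc]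
        rw [heq]
        exact (mulMulVecCLM (C * A' ^ k) v).hasFDerivAt.comp_hasDerivAt s hd
      have hev : (fun u : ℝ => (C * A' ^ k * exp (u • A')).mulVec v)
          =ᶠ[nhds s] (fun _ => (0 : Fin q → ℝ)) :=
        Filter.eventuallyEq_of_mem (isOpen_Ioo.mem_nhds hs) ih
      have h0 : HasDerivAt (fun u : ℝ => (C * A' ^ k * exp (u • A')).mulVec v)
          (0 : Fin q → ℝ) s :=
        (hasDerivAt_const s (0 : Fin q → ℝ)).congr_of_eventuallyEq hev
      exact hderiv.unique h0
  have hcont : Continuous fun s : ℝ => (C * A' ^ k * exp (s • A')).mulVec v :=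
    (mulMulVecCLM (C * A' ^ k) v).continuous.comp (continuous_expSmul A')
  have h0mem : (0:ℝ) ∈ closure (Ioo (0:ℝ) t₁) := by
    rw [closure_Ioo ht₁.ne]
    exact ⟨le_refl 0, ht₁.le⟩
  have := (Set.EqOn.closure (fun s hs => main k s hs) hcont continuous_const) h0mem
  simpa [exp_zero] using this

/-- If all the coefficients `(C A'^k) v` vanish, then `(C exp(sA')) v` vanishes. -/
lemma exp_mulVec_zero {q : ℕ} (A' : Matrix (Fin n) (Fin n) ℝ) (C : Matrix (Fin q) (Fin n) ℝ)
    (v : Fin n → ℝ) (h : ∀ k, (C * A' ^ k).mulVec v = 0) (s : ℝ) :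
    (C * exp (s • A')).mulVec v = 0 := by
  have hs := NormedSpace.exp_series_hasSum_exp' (𝕂 := ℝ) (s • A')
  have h2 := hs.map (mulMulVecCLM C v) (mulMulVecCLM C v).continuous
  have h3 : (fun k : ℕ => (mulMulVecCLM C v) ((k !⁻¹ : ℝ) • (s • A') ^ k))
      = fun _ => (0 : Fin q → ℝ) := by
    funext k
    rw [smul_pow]
    simp [_root_.map_smul, h k]
  simp only [Function.comp_def] at h2
  rw [h3] at h2
  have h4 := h2.unique hasSum_zero
  simp only [mulMulVecCLM_apply] at h4
  exact h4

/-- Cayley–Hamilton: vanishing for `k < n` extends to all powers. -/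
lemma pow_all_of_pow_lt {q : ℕ} (A' : Matrix (Fin n) (Fin n) ℝ) (C : Matrix (Fin q) (Fin n) ℝ)
    (v : Fin n → ℝ) (h : ∀ k < n, (C * A' ^ k).mulVec v = 0) (k : ℕ) :
    (C * A' ^ k).mulVec v = 0 := by
  rcases Nat.eq_zero_or_pos n with hn | hn
  · subst hn
    funext j
    simp [Matrix.mulVec, dotProduct]
  by_cases hk : k < n
  · exact h k hk
  have hCH := Matrix.pow_eq_aeval_mod_charpoly A' k
  set q' : Polynomial ℝ := (Polynomial.X ^ k) %ₘ A'.charpoly with hq'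
  have hdeg : q'.natDegree < n := by
    have hm : A'.charpoly.Monic := A'.charpoly_monic
    have h1 : A'.charpoly ≠ 1 := by
      intro hone
      have hdim := A'.charpoly_natDegree_eq_dim
      rw [hone] at hdim
      simp [Fintype.card_fin] at hdim
      omega
    have := Polynomial.natDegree_modByMonic_lt (Polynomial.X ^ k) hm h1
    rwa [A'.charpoly_natDegree_eq_dim, Fintype.card_fin] at this
  have hsum : A' ^ k = ∑ i ∈ Finset.range n, q'.coeff i • A' ^ i := by
    rw [hCH]
    exact Polynomial.aeval_eq_sum_range' hdeg A'
  calc (C * A' ^ k).mulVec v = (mulMulVecCLM C v) (A' ^ k) := rfl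
    _ = ∑ i ∈ Finset.range n, (mulMulVecCLM C v) (q'.coeff i • A' ^ i) := by
        rw [hsum, map_sum]
    _ = 0 := by
        apply Finset.sum_eq_zero
        intro i hi
        rw [_root_.map_smul]
        simp [h i (Finset.mem_range.mp hi)]

lemma rank_eq_iff_inj {ι : Type*} [Fintype ι] [DecidableEq ι] (M : Matrix (Fin r) ι ℝ) :
    M.rank = r ↔ ∀ y : Fin r → ℝ, Mᵀ.mulVec y = 0 → y = 0 := by
  rw [← Matrix.rank_transpose]
  have hrn := LinearMap.finrank_range_add_finrank_ker (Mᵀ.mulVecLin)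
  rw [Module.finrank_fin_fun] at hrn
  rw [Matrix.rank]
  constructor
  · intro h y hy
    have hker0 : Module.finrank ℝ (LinearMap.ker Mᵀ.mulVecLin) = 0 := by omega
    have hker : LinearMap.ker Mᵀ.mulVecLin = ⊥ := Submodule.finrank_eq_zero.mp hker0
    have hinj := LinearMap.ker_eq_bot.mp hker
    exact hinj (a₁ := y) (a₂ := 0) (by simpa [Matrix.mulVec_transpose] using hy)
  · intro h
    have hker : LinearMap.ker Mᵀ.mulVecLin = ⊥ :=
      LinearMap.ker_eq_bot'.mpr fun y hy => h y (by simpa [← Matrix.mulVec_transpose] using hy)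
    have : Module.finrank ℝ (LinearMap.ker Mᵀ.mulVecLin) = 0 := by rw [hker]; simp
    omega

lemma mulVec_inj_iff {m : ℕ} (M : Matrix (Fin m) (Fin m) ℝ) :
    Function.Injective M.mulVec ↔ ∀ y, M.mulVec y = 0 → y = 0 := by
  have h1 : Function.Injective M.mulVec ↔ Function.Injective M.mulVecLin := by
    constructor <;> intro h a b hab <;> exact h (by simpa using hab)
  rw [h1, ← LinearMap.ker_eq_bot, LinearMap.ker_eq_bot']
  constructor <;> intro h y hy <;> exact h y (by simpa using hy)

end Aux

section Main

open NormedSpace Set MeasureTheory Function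
open scoped Nat

attribute [local instance] Matrix.linftyOpNormedAddCommGroup Matrix.linftyOpNormedRing
  Matrix.linftyOpNormedAlgebra

/-- If `rank(F) = r`, the output controllability rank condition `rank(F·𝒞) = r` holds
if and only if the `r × r` target-control Gramian `F · W_c(t₁) · Fᵀ` is invertible
(for `t₁ > 0`). -/
theorem output_controllability_iff_target_gramian_invertible {n p r : ℕ}
    (A : Matrix (Fin n) (Fin n) ℝ) (B : Matrix (Fin n) (Fin p) ℝ)
    (F : Matrix (Fin r) (Fin n) ℝ) (t₁ : ℝ) (ht₁ : 0 < t₁)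
    (hF : F.rank = r) :
    (F * ctrbMat A B).rank = r ↔ IsUnit (F * ctrbGram A B t₁ * Fᵀ) := by
  classical
  -- entrywise description of `(F * 𝒞)ᵀ *ᵥ y`
  have hM : ∀ (y : Fin r → ℝ) (k : Fin n) (j : Fin p),
      (F * ctrbMat A B)ᵀ.mulVec y (k, j) = ((Bᵀ * Aᵀ ^ (k : ℕ) * Fᵀ).mulVec y) j := by
    intro y k j
    have h1 : ∀ i, (F * ctrbMat A B) i (k, j) = (F * A ^ (k : ℕ) * B) i j := by
      intro i
      rw [Matrix.mul_assoc]
      simp [Matrix.mul_apply, ctrbMat]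
    have h2 : Bᵀ * Aᵀ ^ (k : ℕ) * Fᵀ = (F * A ^ (k : ℕ) * B)ᵀ := by
      simp [Matrix.transpose_mul, Matrix.transpose_pow, Matrix.mul_assoc]
    rw [h2]
    simp only [Matrix.mulVec, dotProduct, Matrix.transpose_apply, h1]
  -- the integrand
  set E : ℝ → Matrix (Fin n) (Fin n) ℝ :=
    fun s => exp (s • A) * B * Bᵀ * exp (s • Aᵀ) with hE
  have hcontE : ∀ i j, Continuous fun s : ℝ => E s i j := by
    intro i j
    exact ((((continuous_expSmul A).matrix_mul continuous_const).matrix_mul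
      continuous_const).matrix_mul (continuous_expSmul Aᵀ)).matrix_elem i j
  have hGram : ∀ i j, ctrbGram A B t₁ i j = ∫ s in (0:ℝ)..t₁, E s i j := fun i j => rfl
  have hEfact : ∀ s : ℝ, E s = (Bᵀ * exp (s • Aᵀ))ᵀ * (Bᵀ * exp (s • Aᵀ)) := by
    intro s
    have h3 : (exp (s • Aᵀ))ᵀ = exp (s • A) := by
      have h4 := Matrix.exp_transpose (s • A)
      rw [Matrix.transpose_smul] at h4
      rw [h4, Matrix.transpose_transpose]
    rw [Matrix.transpose_mul, Matrix.transpose_transpose, h3, hE]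
    simp only [Matrix.mul_assoc]
  -- key equivalence for each `y`
  have key : ∀ y : Fin r → ℝ,
      ((F * ctrbGram A B t₁ * Fᵀ).mulVec y = 0 ↔ (F * ctrbMat A B)ᵀ.mulVec y = 0) := by
    intro y
    have hu_cont : Continuous fun s : ℝ => (Bᵀ * exp (s • Aᵀ)).mulVec (Fᵀ.mulVec y) :=
      (mulMulVecCLM Bᵀ (Fᵀ.mulVec y)).continuous.comp (continuous_expSmul Aᵀ)
    have hpt : ∀ s : ℝ, (Fᵀ.mulVec y) ⬝ᵥ (E s).mulVec (Fᵀ.mulVec y)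
        = ((Bᵀ * exp (s • Aᵀ)).mulVec (Fᵀ.mulVec y))
          ⬝ᵥ ((Bᵀ * exp (s • Aᵀ)).mulVec (Fᵀ.mulVec y)) := by
      intro s
      rw [hEfact s, ← Matrix.mulVec_mulVec, Matrix.dotProduct_mulVec, Matrix.vecMul_transpose]
    constructor
    · -- Gramian kernel → controllability kernel
      intro hy
      have h1 : y ⬝ᵥ (F * ctrbGram A B t₁ * Fᵀ).mulVec y
          = (Fᵀ.mulVec y) ⬝ᵥ (ctrbGram A B t₁).mulVec (Fᵀ.mulVec y) := by
        rw [← Matrix.mulVec_mulVec, ← Matrix.mulVec_mulVec, Matrix.dotProduct_mulVec,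
          ← Matrix.mulVec_transpose]
      have hInt : ∀ ij : Fin n × Fin n, IntervalIntegrable
          (fun s => Fᵀ.mulVec y ij.1 * (E s ij.1 ij.2 * Fᵀ.mulVec y ij.2))
          MeasureTheory.volume 0 t₁ := fun ij =>
        (continuous_const.mul ((hcontE ij.1 ij.2).mul continuous_const)).intervalIntegrable _ _
      have h2 : (Fᵀ.mulVec y) ⬝ᵥ (ctrbGram A B t₁).mulVec (Fᵀ.mulVec y)
          = ∫ s in (0:ℝ)..t₁, ((Bᵀ * exp (s • Aᵀ)).mulVec (Fᵀ.mulVec y))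
              ⬝ᵥ ((Bᵀ * exp (s • Aᵀ)).mulVec (Fᵀ.mulVec y)) := by
        calc (Fᵀ.mulVec y) ⬝ᵥ (ctrbGram A B t₁).mulVec (Fᵀ.mulVec y)
            = ∑ ij : Fin n × Fin n,
                Fᵀ.mulVec y ij.1 * (ctrbGram A B t₁ ij.1 ij.2 * Fᵀ.mulVec y ij.2) := by
              rw [Fintype.sum_prod_type]
              simp [dotProduct, Matrix.mulVec, Finset.mul_sum]
          _ = ∑ ij : Fin n × Fin n, ∫ s in (0:ℝ)..t₁,
                Fᵀ.mulVec y ij.1 * (E s ij.1 ij.2 * Fᵀ.mulVec y ij.2) := by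
              refine Finset.sum_congr rfl fun ij _ => ?_
              rw [hGram, ← intervalIntegral.integral_mul_const,
                ← intervalIntegral.integral_const_mul]
          _ = ∫ s in (0:ℝ)..t₁, ∑ ij : Fin n × Fin n,
                Fᵀ.mulVec y ij.1 * (E s ij.1 ij.2 * Fᵀ.mulVec y ij.2) := by
              rw [← intervalIntegral.integral_finset_sum fun ij _ => hInt ij]
          _ = ∫ s in (0:ℝ)..t₁, ((Bᵀ * exp (s • Aᵀ)).mulVec (Fᵀ.mulVec y))
                ⬝ᵥ ((Bᵀ * exp (s • Aᵀ)).mulVec (Fᵀ.mulVec y)) := by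
              apply intervalIntegral.integral_congr
              intro s _
              simp only [Fintype.sum_prod_type]
              rw [← hpt s]
              simp [dotProduct, Matrix.mulVec, Finset.mul_sum]
      have hval : (∫ s in (0:ℝ)..t₁, ((Bᵀ * exp (s • Aᵀ)).mulVec (Fᵀ.mulVec y))
          ⬝ᵥ ((Bᵀ * exp (s • Aᵀ)).mulVec (Fᵀ.mulVec y))) = 0 := by
        rw [← h2, ← h1, hy, dotProduct_zero]
      set phi : ℝ → ℝ := fun s => ((Bᵀ * exp (s • Aᵀ)).mulVec (Fᵀ.mulVec y))
          ⬝ᵥ ((Bᵀ * exp (s • Aᵀ)).mulVec (Fᵀ.mulVec y)) with hphi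
      have hphicont : Continuous phi := by
        rw [hphi]
        simp only [dotProduct]
        exact continuous_finset_sum _ fun j _ =>
          ((continuous_apply j).comp hu_cont).mul ((continuous_apply j).comp hu_cont)
      have hphinonneg : ∀ s : ℝ, 0 ≤ phi s := by
        intro s
        rw [hphi]
        exact Finset.sum_nonneg fun j _ => mul_self_nonneg _
      have hsupp : volume (support phi ∩ Ioc 0 t₁) = 0 := by
        by_contra hne
        have hpos : 0 < volume (support phi ∩ Ioc 0 t₁) :=
          lt_of_le_of_ne zero_le (Ne.symm hne)
        have hgt := (intervalIntegral.integral_pos_iff_support_of_nonneg_ae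
          (Filter.Eventually.of_forall hphinonneg)
          (hphicont.intervalIntegrable 0 t₁)).mpr ⟨ht₁, hpos⟩
        rw [show (∫ s in (0:ℝ)..t₁, phi s) = 0 from hval] at hgt
        exact lt_irrefl 0 hgt
      have huzero : ∀ s ∈ Ioo (0:ℝ) t₁,
          (Bᵀ * exp (s • Aᵀ)).mulVec (Fᵀ.mulVec y) = 0 := by
        intro s hs
        by_contra hus
        have hmem : s ∈ support phi ∩ Ioo 0 t₁ := by
          refine ⟨?_, hs⟩
          simp only [mem_support, hphi]
          intro hzero
          apply hus
          funext j
          have hj := (Finset.sum_eq_zero_iff_of_nonneg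
            (fun j _ => mul_self_nonneg
              ((Bᵀ * exp (s • Aᵀ)).mulVec (Fᵀ.mulVec y) j))).mp hzero j (Finset.mem_univ j)
          exact mul_self_eq_zero.mp hj
        have hopen : IsOpen (support phi ∩ Ioo 0 t₁) := by
          refine IsOpen.inter ?_ isOpen_Ioo
          rw [Function.support_eq_preimage]
          exact IsOpen.preimage hphicont isOpen_compl_singleton
        have hle : volume (support phi ∩ Ioo 0 t₁) ≤ volume (support phi ∩ Ioc 0 t₁) :=
          measure_mono (inter_subset_inter_right _ Ioo_subset_Ioc_self)
        have h00 : volume (support phi ∩ Ioo 0 t₁) = 0 :=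
          le_antisymm (hsupp ▸ hle) zero_le
        exact (hopen.measure_pos volume ⟨s, hmem⟩).ne' h00
      have hall := pow_zero_of_exp_zero Aᵀ Bᵀ (Fᵀ.mulVec y) ht₁ huzero
      funext kj
      obtain ⟨k, j⟩ := kj
      have hMkj := hM y k j
      rw [Pi.zero_apply, hMkj, ← Matrix.mulVec_mulVec, hall (k : ℕ)]
      rfl
    · -- controllability kernel → Gramian kernel
      intro hy
      have hlt : ∀ k < n, (Bᵀ * Aᵀ ^ k).mulVec (Fᵀ.mulVec y) = 0 := by
        intro k hk
        funext j
        have hc := congrFun hy (⟨k, hk⟩, j)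
        rw [hM y ⟨k, hk⟩ j] at hc
        simpa [Matrix.mulVec_mulVec] using hc
      have hall := pow_all_of_pow_lt Aᵀ Bᵀ (Fᵀ.mulVec y) hlt
      have hexp : ∀ s : ℝ, (Bᵀ * exp (s • Aᵀ)).mulVec (Fᵀ.mulVec y) = 0 :=
        fun s => exp_mulVec_zero Aᵀ Bᵀ (Fᵀ.mulVec y) hall s
      have hWw : (ctrbGram A B t₁).mulVec (Fᵀ.mulVec y) = 0 := by
        funext i
        have hInt2 : ∀ j : Fin n, IntervalIntegrable
            (fun s => E s i j * Fᵀ.mulVec y j) MeasureTheory.volume 0 t₁ := fun j =>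
          ((hcontE i j).mul continuous_const).intervalIntegrable _ _
        have hint : ∀ j, ctrbGram A B t₁ i j * Fᵀ.mulVec y j
            = ∫ s in (0:ℝ)..t₁, E s i j * Fᵀ.mulVec y j := fun j => by
          rw [hGram i j, ← intervalIntegral.integral_mul_const]
        have hzero : ∀ s : ℝ, (∑ j : Fin n, E s i j * Fᵀ.mulVec y j) = 0 := by
          intro s
          have hEzero : (E s).mulVec (Fᵀ.mulVec y) = 0 := by
            have hEf : E s = (exp (s • A) * B) * (Bᵀ * exp (s • Aᵀ)) := by
              rw [hE]; simp only [Matrix.mul_assoc]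
            rw [hEf, ← Matrix.mulVec_mulVec, hexp s, Matrix.mulVec_zero]
          have h6 := congrFun hEzero i
          simpa [Matrix.mulVec, dotProduct] using h6
        show (∑ j : Fin n, ctrbGram A B t₁ i j * Fᵀ.mulVec y j) = 0
        rw [Finset.sum_congr rfl fun j _ => hint j,
          ← intervalIntegral.integral_finset_sum fun j _ => hInt2 j]
        simp only [hzero]
        simp
      rw [← Matrix.mulVec_mulVec, ← Matrix.mulVec_mulVec, hWw, Matrix.mulVec_zero]
  -- assemble
  rw [rank_eq_iff_inj, ← Matrix.mulVec_injective_iff_isUnit, mulVec_inj_iff]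
  constructor
  · intro h y hy
    exact h y ((key y).mp hy)
  · intro h y hy
    exact h y ((key y).mpr hy)

end Main
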